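/- Let π be a dominant permutation, and suppose w ≤_L π in left weak order and w ⋖ t_{ab}·w is a Bruhat cover (a < b, ℓ(t_{ab}w) = ℓ(w)+1). Then t_{ab}·w ≤_L π if and only if (w⁻¹(a), w⁻¹(b)) ∈ Inv(π). -/

import Mathlib

open Equiv MvPolynomial

/-- A permutation of ℕ has finite support. -/
def FinSupp (w : Equiv.Perm ℕ) : Prop := {i | w i ≠ i}.Finite

/-- Inversion set Inv(w) = {(i,j) : i < j, w i > w j}. -/
def invSet (w : Equiv.Perm ℕ) : Set (ℕ × ℕ) := {p | p.1 < p.2 ∧ w p.2 < w p.1}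

/-- Co-inversion set coInv(w) = {(i,j) : i < j, w i < w j}. -/
def coinvSet (w : Equiv.Perm ℕ) : Set (ℕ × ℕ) := {p | p.1 < p.2 ∧ w p.1 < w p.2}

/-- Coxeter length ℓ(w) = |Inv(w)|. -/
noncomputable def len (w : Equiv.Perm ℕ) : ℕ := (invSet w).ncard

/-- Cover relation of left weak order: u = s_k * w with ℓ(u) = ℓ(w) + 1. -/
def WeakCover (w u : Equiv.Perm ℕ) : Prop :=
  ∃ k, u = Equiv.swap k (k + 1) * w ∧ len u = len w + 1

/-- Left weak order: reflexive-transitive closure of weak covers. -/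
def leL (w u : Equiv.Perm ℕ) : Prop := Relation.ReflTransGen WeakCover w u

/-- π avoids the pattern 132 (π is dominant). -/
def Avoids132 (π : Equiv.Perm ℕ) : Prop :=
  ¬ ∃ a b c : ℕ, a < b ∧ b < c ∧ π a < π c ∧ π c < π b

/-- Rothe diagram D(π) (0-indexed conventions). -/
def Rothe (π : Equiv.Perm ℕ) : Set (ℕ × ℕ) := {p | p.1 < π⁻¹ p.2 ∧ p.2 < π p.1}

/-- Young diagram of a partition (0-indexed): row i has l i cells. -/
def yd (l : ℕ → ℕ) : Set (ℕ × ℕ) := {p | p.2 < l p.1}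

/-- Conjugate partition (0-indexed): column j has |{i : l i > j}| cells. -/
noncomputable def conjPart (l : ℕ → ℕ) (j : ℕ) : ℕ := {i | j < l i}.ncard

/-- A pipe dream: a finite set of crossing tiles together with the (uniquely
determined) labels of the pipes on the four edges of each tile.  At a cross
tile the pipes pass straight through; at a bump tile the pipe from the north
exits west and the pipe from the east exits south.  Pipe j enters the quadrant
at the north edge of column j. -/
structure PipeDream where
  cross : Finset (ℕ × ℕ)
  north : ℕ × ℕ → ℕ
  east : ℕ × ℕ → ℕ
  south : ℕ × ℕ → ℕ
  west : ℕ × ℕ → ℕ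
  north_top : ∀ j, north (0, j) = j
  north_succ : ∀ i j, north (i + 1, j) = south (i, j)
  east_eq : ∀ i j, east (i, j) = west (i, j + 1)
  south_cross : ∀ p ∈ cross, south p = north p
  west_cross : ∀ p ∈ cross, west p = east p
  south_bump : ∀ p, p ∉ cross → south p = east p
  west_bump : ∀ p, p ∉ cross → west p = north p

namespace PipeDream

/-- Pipes a and b cross at position p. -/
def CrossAt (P : PipeDream) (a b : ℕ) (p : ℕ × ℕ) : Prop :=
  p ∈ P.cross ∧ ({P.north p, P.east p} : Set ℕ) = {a, b}

/-- A pipe dream is reduced if no two pipes cross more than once. -/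
def Reduced (P : PipeDream) : Prop :=
  ∀ a b p q, P.CrossAt a b p → P.CrossAt a b q → p = q

/-- P is a pipe dream for the permutation w: pipe a exits on the west edge at
row w⁻¹(a), i.e. the one-line notation read along the west edge is w. -/
def IsFor (P : PipeDream) (w : Equiv.Perm ℕ) : Prop := ∀ i, P.west (i, 0) = w i

/-- Pipe k passes through the tile p. -/
def OnPipe (P : PipeDream) (k : ℕ) (p : ℕ × ℕ) : Prop := P.north p = k ∨ P.east p = k

/-- p lies weakly northwest of pipe k. -/
def NWOfPipe (P : PipeDream) (k : ℕ) (p : ℕ × ℕ) : Prop :=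
  ∃ q, P.OnPipe k q ∧ p.1 ≤ q.1 ∧ p.2 ≤ q.2

end PipeDream

/-- The set of reduced pipe dreams for w. -/
def PD (w : Equiv.Perm ℕ) : Set PipeDream := {P | P.Reduced ∧ P.IsFor w}

/-- The set of π-dominated positions of a pipe dream P ∈ PD(w), where π is the
dominant permutation with Rothe diagram the Young diagram of l:
row(p) < λ'(π(w⁻¹(s_p))) (0-indexed), s_p being the pipe exiting p south. -/
noncomputable def dominated (π : Equiv.Perm ℕ) (l : ℕ → ℕ) (w : Equiv.Perm ℕ)
    (P : PipeDream) : Set (ℕ × ℕ) :=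
  {p | p.1 < conjPart l (π (w⁻¹ (P.south p)))}

/-- The Schubert polynomial as the pipe dream generating function. -/
noncomputable def Schub (w : Equiv.Perm ℕ) : MvPolynomial ℕ ℤ :=
  ∑ᶠ P ∈ PD w, ∏ p ∈ P.cross, X p.1

/-- The polynomial ring ℤ[x;y]: x-variables are `Sum.inl i`, y-variables `Sum.inr i`. -/
abbrev PolyXY := MvPolynomial (ℕ ⊕ ℕ) ℤ

/-- The field of rational functions in the x- and y-variables. -/
noncomputable abbrev RatXY := FractionRing PolyXY

noncomputable def Xv (i : ℕ) : RatXY := algebraMap PolyXY RatXY (X (Sum.inl i))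
noncomputable def Yv (i : ℕ) : RatXY := algebraMap PolyXY RatXY (X (Sum.inr i))

/-- The π-padded Schubert polynomial 𝔖_w^π(x;y) = y^λ · 𝔖_w(x₁/y₁, x₂/y₂, …),
viewed in the field of rational functions. -/
noncomputable def padded (l : ℕ → ℕ) (w : Equiv.Perm ℕ) : RatXY :=
  (∏ᶠ i, Yv i ^ l i) * (aeval (fun i => Xv i / Yv i) (Schub w))

/-- Δ = Σ_i x_i ∂/∂y_i. -/
noncomputable def deltaOp (f : PolyXY) : PolyXY :=
  ∑ᶠ i : ℕ, X (Sum.inl i) * pderiv (Sum.inr i) f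

/-- ∇ = Σ_i y_i ∂/∂x_i. -/
noncomputable def nablaOp (f : PolyXY) : PolyXY :=
  ∑ᶠ i : ℕ, X (Sum.inr i) * pderiv (Sum.inl i) f


/-! ### Auxiliary lemmas for stmt4 -/

theorem Equiv.Perm.apply_inv_self (f : Equiv.Perm ℕ) (x : ℕ) : f (f⁻¹ x) = x :=
  f.apply_symm_apply x

theorem Equiv.Perm.inv_apply_self (f : Equiv.Perm ℕ) (x : ℕ) : f⁻¹ (f x) = x :=
  f.symm_apply_apply x

lemma mem_invSet' {w : Equiv.Perm ℕ} {p : ℕ × ℕ} :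
    p ∈ invSet w ↔ p.1 < p.2 ∧ w p.2 < w p.1 := Iff.rfl

lemma eq_inv_iff' (w : Equiv.Perm ℕ) (z m : ℕ) : w z = m ↔ z = w⁻¹ m := by
  constructor
  · intro hz; rw [← hz]; exact (w.inv_apply_self z).symm
  · rintro rfl; exact w.apply_inv_self m

lemma invSet_adj_lt {w : Equiv.Perm ℕ} {k : ℕ} (h : w⁻¹ k < w⁻¹ (k + 1)) :
    invSet (Equiv.swap k (k + 1) * w) = insert (w⁻¹ k, w⁻¹ (k + 1)) (invSet w) := by
  ext ⟨x, y⟩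
  have e1 := eq_inv_iff' w x k
  have e2 := eq_inv_iff' w y k
  have e3 := eq_inv_iff' w x (k + 1)
  have e4 := eq_inv_iff' w y (k + 1)
  simp only [invSet, Set.mem_insert_iff, Set.mem_setOf_eq, Equiv.Perm.mul_apply,
    Equiv.swap_apply_def, Prod.mk.injEq]
  split_ifs <;> omega

lemma invSet_adj_gt {w : Equiv.Perm ℕ} {k : ℕ} (h : w⁻¹ (k + 1) < w⁻¹ k) :
    invSet (Equiv.swap k (k + 1) * w) = invSet w \ {(w⁻¹ (k + 1), w⁻¹ k)} := by
  ext ⟨x, y⟩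
  have e1 := eq_inv_iff' w x k
  have e2 := eq_inv_iff' w y k
  have e3 := eq_inv_iff' w x (k + 1)
  have e4 := eq_inv_iff' w y (k + 1)
  simp only [invSet, Set.mem_diff, Set.mem_singleton_iff, Set.mem_setOf_eq,
    Equiv.Perm.mul_apply, Equiv.swap_apply_def, Prod.mk.injEq]
  split_ifs <;> omega

lemma invSet_finite_of_finSupp {π : Equiv.Perm ℕ} (hπ : FinSupp π) :
    (invSet π).Finite := by
  obtain ⟨N, hN⟩ := hπ.bddAbove
  have hid : ∀ m, N < m → π m = m := by
    intro m hm
    by_contra hc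
    exact absurd (hN hc) (by omega)
  apply Set.Finite.subset ((Set.finite_Iic N).prod (Set.finite_Iic N))
  rintro ⟨x, y⟩ ⟨hxy, hval⟩
  dsimp only at hxy hval
  have hy : y ≤ N := by
    by_contra hc
    push_neg at hc
    have h1 : π y = y := hid y hc
    have h2 : π x ≤ N ∨ π x = x := by
      by_contra hc2
      push_neg at hc2
      have := hid (π x) (by omega)
      exact hc2.2 (π.injective this)
    rcases h2 with h2 | h2 <;> omega
  exact ⟨by simpa using (by omega : x ≤ N), by simpa using hy⟩

lemma perm_eq_one_of_mono' {u : Equiv.Perm ℕ} (h : ∀ k, u k ≤ u (k + 1)) : u = 1 := by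
  have hmono : StrictMono u := strictMono_nat_of_lt_succ fun n =>
    lt_of_le_of_ne (h n) fun he => absurd (u.injective he) (by omega)
  have key : ∀ n, u n = n := by
    intro n
    induction n using Nat.strong_induction_on with
    | _ n ih =>
      obtain ⟨k, hk⟩ := u.surjective n
      rcases lt_trichotomy k n with hlt | rfl | hgt
      · rw [ih k hlt] at hk; omega
      · exact hk
      · exfalso
        have h1 : n ≤ u n := hmono.le_apply
        have h2 : u n < u k := hmono hgt
        omega
  exact Equiv.ext key

lemma exists_descent' {u : Equiv.Perm ℕ} (hu : u ≠ 1) : ∃ k, u (k + 1) < u k := by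
  by_contra hc
  push_neg at hc
  exact hu (perm_eq_one_of_mono' hc)

lemma exists_new_pair {π w : Equiv.Perm ℕ} (hsub : invSet w ⊆ invSet π) (hne : w ≠ π) :
    ∃ k, w⁻¹ k < w⁻¹ (k + 1) ∧ (w⁻¹ k, w⁻¹ (k + 1)) ∈ invSet π ∧
      (w⁻¹ k, w⁻¹ (k + 1)) ∉ invSet w := by
  have hu : π * w⁻¹ ≠ 1 := by
    intro h1
    exact hne (mul_inv_eq_one.mp h1).symm
  obtain ⟨k, hk⟩ := exists_descent' hu
  simp only [Equiv.Perm.mul_apply] at hk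
  have hne2 : w⁻¹ k ≠ w⁻¹ (k + 1) := fun h => by
    have := congrArg w h
    rw [w.apply_inv_self, w.apply_inv_self] at this
    omega
  rcases hne2.lt_or_gt with hlt | hgt
  · refine ⟨k, hlt, ⟨hlt, hk⟩, fun hmem => ?_⟩
    have h2 : w (w⁻¹ (k + 1)) < w (w⁻¹ k) := hmem.2
    rw [w.apply_inv_self, w.apply_inv_self] at h2
    omega
  · exfalso
    have hmem : (w⁻¹ (k + 1), w⁻¹ k) ∈ invSet w := by
      refine mem_invSet'.mpr ⟨hgt, ?_⟩
      rw [w.apply_inv_self, w.apply_inv_self]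
      omega
    have := (hsub hmem).2
    dsimp only at this
    omega

/-- necessity: weak order implies containment of inversion sets -/
lemma leL_subset {π : Equiv.Perm ℕ} (hfin : (invSet π).Finite) :
    ∀ {w : Equiv.Perm ℕ}, leL w π → (invSet w).Finite ∧ invSet w ⊆ invSet π := by
  intro w h
  induction h using Relation.ReflTransGen.head_induction_on with
  | refl => exact ⟨hfin, subset_rfl⟩
  | head hwc _ ih =>
    rename_i w' c _
    obtain ⟨k, rfl, hlen⟩ := hwc
    obtain ⟨hcfin, hcsub⟩ := ih
    rcases lt_trichotomy (w'⁻¹ k) (w'⁻¹ (k + 1)) with hlt | heq | hgt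
    · rw [invSet_adj_lt hlt] at hcfin hcsub
      exact ⟨hcfin.subset (Set.subset_insert _ _),
        (Set.subset_insert _ _).trans hcsub⟩
    · exfalso
      have := congrArg w' heq
      rw [w'.apply_inv_self, w'.apply_inv_self] at this
      omega
    · exfalso
      have hq : (w'⁻¹ (k + 1), w'⁻¹ k) ∈ invSet w' := by
        refine mem_invSet'.mpr ⟨hgt, ?_⟩
        rw [w'.apply_inv_self, w'.apply_inv_self]
        omega
      have hrw := invSet_adj_gt hgt
      have hwfin : (invSet w').Finite := by
        have : invSet w' = insert (w'⁻¹ (k + 1), w'⁻¹ k)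
            (invSet (Equiv.swap k (k + 1) * w')) := by
          rw [hrw, Set.insert_diff_singleton, Set.insert_eq_of_mem hq]
        rw [this]
        exact hcfin.insert _
      have h1 : len (Equiv.swap k (k + 1) * w') = len w' - 1 := by
        unfold len
        rw [hrw, Set.ncard_diff_singleton_of_mem hq]
      have h2 : 0 < len w' := by
        unfold len
        exact (Set.ncard_pos hwfin).mpr ⟨_, hq⟩
      omega

/-- sufficiency: inversion set containment implies weak order -/
lemma subset_leL {π : Equiv.Perm ℕ} (hfin : (invSet π).Finite) :
    ∀ (n : ℕ) (w : Equiv.Perm ℕ), (invSet π \ invSet w).ncard ≤ n →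
      invSet w ⊆ invSet π → leL w π := by
  intro n
  induction n with
  | zero =>
    intro w hn hsub
    by_cases hwπ : w = π
    · subst hwπ; exact Relation.ReflTransGen.refl
    · exfalso
      obtain ⟨k, hlt, hpπ, hpw⟩ := exists_new_pair hsub hwπ
      have hempty : invSet π \ invSet w = ∅ :=
        (Set.ncard_eq_zero hfin.diff).mp (Nat.le_zero.mp hn)
      have hp : (w⁻¹ k, w⁻¹ (k + 1)) ∈ invSet π \ invSet w := ⟨hpπ, hpw⟩
      rw [hempty] at hp
      exact hp
  | succ n ih =>
    intro w hn hsub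
    by_cases hwπ : w = π
    · subst hwπ; exact Relation.ReflTransGen.refl
    · obtain ⟨k, hlt, hpπ, hpw⟩ := exists_new_pair hsub hwπ
      have hwfin : (invSet w).Finite := hfin.subset hsub
      have hins := invSet_adj_lt hlt
      have hcover : WeakCover w (Equiv.swap k (k + 1) * w) := by
        refine ⟨k, rfl, ?_⟩
        unfold len
        rw [hins, Set.ncard_insert_of_notMem hpw hwfin]
      have hmeas : invSet π \ invSet (Equiv.swap k (k + 1) * w)
          = (invSet π \ invSet w) \ {(w⁻¹ k, w⁻¹ (k + 1))} := by
        rw [hins]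
        ext q
        simp only [Set.mem_diff, Set.mem_insert_iff, Set.mem_singleton_iff]
        tauto
      have hcard : (invSet π \ invSet (Equiv.swap k (k + 1) * w)).ncard ≤ n := by
        have hp : (w⁻¹ k, w⁻¹ (k + 1)) ∈ invSet π \ invSet w := ⟨hpπ, hpw⟩
        rw [hmeas, Set.ncard_diff_singleton_of_mem hp]
        omega
      have hsub' : invSet (Equiv.swap k (k + 1) * w) ⊆ invSet π := by
        rw [hins]
        exact Set.insert_subset hpπ hsub
      exact Relation.ReflTransGen.head hcover (ih _ hcard hsub')

noncomputable def fsw (c d : ℕ) (p : ℕ × ℕ) : ℕ × ℕ :=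
  if Equiv.swap c d p.2 < Equiv.swap c d p.1 then p
  else (Equiv.swap c d p.1, Equiv.swap c d p.2)

lemma fsw_mk (c d x y : ℕ) : fsw c d (x, y) =
    if Equiv.swap c d y < Equiv.swap c d x then (x, y)
    else (Equiv.swap c d x, Equiv.swap c d y) := rfl

lemma fsw_fsw (c d : ℕ) {p : ℕ × ℕ} (hp : p.1 < p.2) : fsw c d (fsw c d p) = p := by
  obtain ⟨x, y⟩ := p
  have hxy : x < y := hp
  by_cases h1 : Equiv.swap c d y < Equiv.swap c d x
  · have e : fsw c d (x, y) = (x, y) := by rw [fsw_mk, if_pos h1]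
    rw [e, e]
  · have e : fsw c d (x, y) = (Equiv.swap c d x, Equiv.swap c d y) := by rw [fsw_mk, if_neg h1]
    rw [e, fsw_mk, Equiv.swap_apply_self, Equiv.swap_apply_self,
      if_neg (show ¬ y < x by omega)]

lemma fsw_injOn (c d : ℕ) {S : Set (ℕ × ℕ)} (hS : ∀ p ∈ S, p.1 < p.2) :
    Set.InjOn (fsw c d) S := fun p hp q hq h => by
  have h2 := congrArg (fsw c d) h
  rwa [fsw_fsw c d (hS p hp), fsw_fsw c d (hS q hq)] at h2

lemma fsw_maps (v : Equiv.Perm ℕ) {c d : ℕ} (hcd : c < d) (hv : v d < v c) :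
    ∀ p ∈ invSet (v * Equiv.swap c d), fsw c d p ∈ invSet v \ {(c, d)} := by
  rintro ⟨x, y⟩ hp
  obtain ⟨hxy, hval⟩ := mem_invSet'.mp hp
  dsimp only at hxy hval
  simp only [Equiv.Perm.mul_apply] at hval
  have sc : Equiv.swap c d c = d := Equiv.swap_apply_left c d
  have sd : Equiv.swap c d d = c := Equiv.swap_apply_right c d
  have sz : ∀ z, z ≠ c → z ≠ d → Equiv.swap c d z = z := fun z h1 h2 =>
    Equiv.swap_apply_of_ne_of_ne h1 h2
  rw [fsw_mk]
  split_ifs with hflip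
  · refine ⟨mem_invSet'.mpr ⟨hxy, ?_⟩, ?_⟩
    · dsimp only
      rcases eq_or_ne x c with rfl | hxc
      · rcases eq_or_ne y d with rfl | hyd
        · rw [sc, sd] at hval; omega
        · rw [sc, sz y (by omega) hyd] at hval
          exact lt_trans hval hv
      · rcases eq_or_ne x d with rfl | hxd
        · rw [sd, sz y (by omega) (by omega)] at hflip
          omega
        · rcases eq_or_ne y c with rfl | hyc
          · rw [sc, sz x hxc hxd] at hflip; omega
          · rcases eq_or_ne y d with rfl | hyd
            · rw [sd, sz x hxc hxd] at hval
              exact lt_trans hv hval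
            · rw [sz x hxc hxd, sz y hyc hyd] at hflip; omega
    · intro heq
      rw [Set.mem_singleton_iff, Prod.mk.injEq] at heq
      obtain ⟨rfl, rfl⟩ := heq
      rw [sc, sd] at hval
      omega
  · push_neg at hflip
    have hne : Equiv.swap c d x ≠ Equiv.swap c d y := fun h =>
      absurd ((Equiv.swap c d).injective h) (by omega)
    refine ⟨mem_invSet'.mpr ⟨lt_of_le_of_ne hflip hne, ?_⟩, ?_⟩
    · exact hval
    · intro heq
      rw [Set.mem_singleton_iff, Prod.mk.injEq] at heq
      have hx : x = d := by
        have h2 := congrArg (Equiv.swap c d) heq.1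
        rwa [Equiv.swap_apply_self, sc] at h2
      have hy : y = c := by
        have h2 := congrArg (Equiv.swap c d) heq.2
        rwa [Equiv.swap_apply_self, sd] at h2
      omega

lemma fsw_avoid (v : Equiv.Perm ℕ) {c d z : ℕ} (hz1 : c < z) (hz2 : z < d)
    (h1 : v d < v z) (h2 : v z < v c) :
    ∀ p ∈ invSet (v * Equiv.swap c d), fsw c d p ≠ (c, z) ∧ fsw c d p ≠ (z, d) := by
  rintro ⟨x, y⟩ hp
  obtain ⟨hxy, hval⟩ := mem_invSet'.mp hp
  dsimp only at hxy hval
  simp only [Equiv.Perm.mul_apply] at hval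
  have sc : Equiv.swap c d c = d := Equiv.swap_apply_left c d
  have sd : Equiv.swap c d d = c := Equiv.swap_apply_right c d
  have szz : Equiv.swap c d z = z := Equiv.swap_apply_of_ne_of_ne (by omega) (by omega)
  rw [fsw_mk]
  split_ifs with hflip
  · constructor
    · intro heq
      rw [Prod.mk.injEq] at heq
      obtain ⟨rfl, rfl⟩ := heq
      rw [sc, szz] at hval
      omega
    · intro heq
      rw [Prod.mk.injEq] at heq
      obtain ⟨rfl, rfl⟩ := heq
      rw [sd, szz] at hval
      omega
  · constructor <;> intro heq <;> rw [Prod.mk.injEq] at heq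
    · have hx : x = d := by
        have h3 := congrArg (Equiv.swap c d) heq.1
        rwa [Equiv.swap_apply_self, sc] at h3
      have hy : y = z := by
        have h3 := congrArg (Equiv.swap c d) heq.2
        rwa [Equiv.swap_apply_self, szz] at h3
      omega
    · have hx : x = z := by
        have h3 := congrArg (Equiv.swap c d) heq.1
        rwa [Equiv.swap_apply_self, szz] at h3
      have hy : y = c := by
        have h3 := congrArg (Equiv.swap c d) heq.2
        rwa [Equiv.swap_apply_self, sd] at h3
      omega

lemma D'_subset_invSet (π w : Equiv.Perm ℕ) {a b i j : ℕ} (hab : a < b) (hij : i < j)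
    (hwi : w i = a) (hwj : w j = b)
    (hsub : invSet w ⊆ invSet π) (hπji : π j < π i)
    (hB : ∀ z, i < z → z < j → ¬(a < w z ∧ w z < b)) :
    invSet (w * Equiv.swap i j) ⊆ invSet π := by
  have H : ∀ u v : ℕ, u < v → w v < w u → π v < π u := fun u v h1 h2 => (hsub (show (u, v) ∈ invSet w from ⟨h1, h2⟩)).2
  rintro ⟨x, y⟩ hp
  obtain ⟨hxy, hval⟩ := mem_invSet'.mp hp
  dsimp only at hxy hval
  simp only [Equiv.Perm.mul_apply] at hval
  refine mem_invSet'.mpr ⟨hxy, ?_⟩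
  dsimp only
  have sc : Equiv.swap i j i = j := Equiv.swap_apply_left i j
  have sd : Equiv.swap i j j = i := Equiv.swap_apply_right i j
  have sz : ∀ z, z ≠ i → z ≠ j → Equiv.swap i j z = z := fun z h1 h2 =>
    Equiv.swap_apply_of_ne_of_ne h1 h2
  rcases eq_or_ne x i with rfl | hxi
  · rcases eq_or_ne y j with rfl | hyj
    · exact hπji
    · rw [sc, sz y (by omega) hyj] at hval
      have hyne : w y ≠ a := fun h => absurd (w.injective (h.trans hwi.symm)) (by omega)
      rcases lt_trichotomy y j with h | h | h
      · have hBy := hB y hxy h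
        exact H x y hxy (by omega)
      · exact absurd h hyj
      · exact lt_trans (H j y h (by omega)) hπji
  · rcases eq_or_ne x j with rfl | hxj
    · rw [sd, sz y (by omega) (by omega)] at hval
      exact H x y hxy (by omega)
    · rcases eq_or_ne y i with rfl | hyi
      · rw [sc, sz x hxi hxj] at hval
        exact H x y hxy (by omega)
      · rcases eq_or_ne y j with rfl | hyj
        · rw [sd, sz x hxi hxj] at hval
          have hxb : w x ≠ b := fun h => absurd (w.injective (h.trans hwj.symm)) (by omega)
          rcases lt_trichotomy x i with h | h | h
          · exact lt_trans hπji (H x i h (by omega))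
          · exact absurd h hxi
          · have hBx := hB x h hxy
            exact H x y hxy (by omega)
        · rw [sz x hxi hxj, sz y hyi hyj] at hval
          exact H x y hxy hval

/-- cover lemma for dominant π: for w ≤_L π and a Bruhat cover
w ⋖ t_{ab}w, one has t_{ab}w ≤_L π iff (w⁻¹(a), w⁻¹(b)) ∈ Inv(π). -/
theorem stmt4 (π w : Equiv.Perm ℕ) (a b : ℕ) (hπ : FinSupp π)
    (hdom : Avoids132 π) (hw : leL w π) (hab : a < b)
    (hcov : len (Equiv.swap a b * w) = len w + 1) :
    leL (Equiv.swap a b * w) π ↔ (w⁻¹ a, w⁻¹ b) ∈ invSet π := by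
  have hDπ : (invSet π).Finite := invSet_finite_of_finSupp hπ
  obtain ⟨hDwfin, hDwsub⟩ := leL_subset hDπ hw
  have hwi : w (w⁻¹ a) = a := w.apply_inv_self a
  have hwj : w (w⁻¹ b) = b := w.apply_inv_self b
  have hmul : Equiv.swap a b * w = w * Equiv.swap (w⁻¹ a) (w⁻¹ b) :=
    Equiv.swap_mul_eq_mul_swap w a b
  set i := w⁻¹ a with hidef
  set j := w⁻¹ b with hjdef
  have hne : i ≠ j := by
    intro h
    have := congrArg w h
    rw [hwi, hwj] at this
    omega
  rw [hmul] at hcov ⊢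
  -- Step 1: i < j
  have hij : i < j := by
    rcases hne.lt_or_gt with h | h
    · exact h
    · exfalso
      have hv : w i < w j := by rw [hwi, hwj]; exact hab
      have hmaps := fsw_maps w h hv
      have hswc : Equiv.swap i j = Equiv.swap j i := Equiv.swap_comm i j
      rw [hswc] at hcov
      have hinj := fsw_injOn j i (S := invSet (w * Equiv.swap j i))
        (fun p hp => (mem_invSet'.mp hp).1)
      have hle := Set.ncard_le_ncard_of_injOn _ hmaps hinj hDwfin.diff
      have hmem : (j, i) ∈ invSet w := mem_invSet'.mpr ⟨h, by
        dsimp only; rw [hwi, hwj]; exact hab⟩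
      have h1 : (invSet w \ {(j, i)}).ncard = (invSet w).ncard - 1 :=
        Set.ncard_diff_singleton_of_mem hmem
      have h2 : 0 < (invSet w).ncard := (Set.ncard_pos hDwfin).mpr ⟨_, hmem⟩
      unfold len at hcov
      omega
  have hD'fin : (invSet (w * Equiv.swap i j)).Finite := by
    by_contra hinf
    have h0 : (invSet (w * Equiv.swap i j)).ncard = 0 := Set.Infinite.ncard hinf
    unfold len at hcov
    omega
  -- Step 2: no value strictly between a and b sits in position strictly between i and j
  have hB : ∀ z, i < z → z < j → ¬(a < w z ∧ w z < b) := by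
    rintro z hz1 hz2 ⟨hza, hzb⟩
    have hvv : (w * Equiv.swap i j) * Equiv.swap i j = w := by
      rw [mul_assoc, Equiv.swap_mul_self, mul_one]
    have hvi : (w * Equiv.swap i j) i = b := by
      rw [Equiv.Perm.mul_apply, Equiv.swap_apply_left, hwj]
    have hvj : (w * Equiv.swap i j) j = a := by
      rw [Equiv.Perm.mul_apply, Equiv.swap_apply_right, hwi]
    have hvz : (w * Equiv.swap i j) z = w z := by
      rw [Equiv.Perm.mul_apply, Equiv.swap_apply_of_ne_of_ne (by omega) (by omega)]
    have hv : (w * Equiv.swap i j) j < (w * Equiv.swap i j) i := by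
      rw [hvi, hvj]; exact hab
    have hmaps := fsw_maps (w * Equiv.swap i j) hij hv
    rw [hvv] at hmaps
    have havoid := fsw_avoid (w * Equiv.swap i j) hz1 hz2
      (by rw [hvj, hvz]; exact hza) (by rw [hvi, hvz]; exact hzb)
    rw [hvv] at havoid
    have hT1 : (i, j) ∈ invSet (w * Equiv.swap i j) := mem_invSet'.mpr ⟨hij, by
      dsimp only; rw [hvi, hvj]; exact hab⟩
    have hT2 : (i, z) ∈ invSet (w * Equiv.swap i j) := mem_invSet'.mpr ⟨hz1, by
      dsimp only; rw [hvi, hvz]; exact hzb⟩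
    have hT3 : (z, j) ∈ invSet (w * Equiv.swap i j) := mem_invSet'.mpr ⟨hz2, by
      dsimp only; rw [hvj, hvz]; exact hza⟩
    have hmaps' : ∀ p ∈ invSet w,
        fsw i j p ∈ invSet (w * Equiv.swap i j) \ {(i, j), (i, z), (z, j)} := by
      intro p hp
      obtain ⟨hm1, hm2⟩ := hmaps p hp
      obtain ⟨hm3, hm4⟩ := havoid p hp
      refine ⟨hm1, ?_⟩
      intro hmem
      simp only [Set.mem_insert_iff, Set.mem_singleton_iff] at hmem
      rcases hmem with h' | h' | h'
      · exact hm2 (Set.mem_singleton_iff.mpr h')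
      · exact hm3 h'
      · exact hm4 h'
    have hinj := fsw_injOn i j (S := invSet w) (fun p hp => (mem_invSet'.mp hp).1)
    have hle := Set.ncard_le_ncard_of_injOn _ hmaps' hinj hD'fin.diff
    have hTsub : ({(i, j), (i, z), (z, j)} : Set (ℕ × ℕ)) ⊆ invSet (w * Equiv.swap i j) := by
      intro q hq
      simp only [Set.mem_insert_iff, Set.mem_singleton_iff] at hq
      rcases hq with rfl | rfl | rfl <;> assumption
    have hTcard : ({(i, j), (i, z), (z, j)} : Set (ℕ × ℕ)).ncard = 3 := by
      rw [Set.ncard_insert_of_notMem (by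
          simp only [Set.mem_insert_iff, Set.mem_singleton_iff, Prod.mk.injEq]
          omega),
        Set.ncard_insert_of_notMem (by
          simp only [Set.mem_singleton_iff, Prod.mk.injEq]
          omega),
        Set.ncard_singleton]
    have hdiffcard : (invSet (w * Equiv.swap i j) \ {(i, j), (i, z), (z, j)}).ncard
        = (invSet (w * Equiv.swap i j)).ncard - 3 := by
      rw [Set.ncard_diff hTsub (Set.toFinite _), hTcard]
    have h3 : 3 ≤ (invSet (w * Equiv.swap i j)).ncard := by
      rw [← hTcard]
      exact Set.ncard_le_ncard hTsub hD'fin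
    unfold len at hcov
    omega
  constructor
  · intro hle
    obtain ⟨_, hsub'⟩ := leL_subset hDπ hle
    refine hsub' (mem_invSet'.mpr ⟨hij, ?_⟩)
    dsimp only
    rw [Equiv.Perm.mul_apply, Equiv.Perm.mul_apply, Equiv.swap_apply_right,
      Equiv.swap_apply_left, hwi, hwj]
    exact hab
  · intro hmem
    obtain ⟨hij', hπji⟩ := mem_invSet'.mp hmem
    dsimp only at hπji
    have hsubD' : invSet (w * Equiv.swap i j) ⊆ invSet π :=
      D'_subset_invSet π w hab hij hwi hwj hDwsub hπji hB
    exact subset_leL hDπ _ _ le_rfl hsubD'
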